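/- The lattice points of the quadrilateral with vertices (0,0), (0,-2), (x₁,-1), (x₂,-1) (x₁ ≤ 0 ≤ x₂ integers) are exactly (0,0), (0,-2), and (x,-1) for each integer x with x₁ ≤ x ≤ x₂. -/

import Mathlib

/-- The canonical embedding of `ℤ × ℤ` into `ℝ × ℝ`. -/
noncomputable def latticeCast (p : ℤ × ℤ) : ℝ × ℝ := ((p.1 : ℝ), (p.2 : ℝ))

theorem quadrilateral_lattice_points (x₁ x₂ : ℤ) (h₁ : x₁ ≤ 0) (h₂ : 0 ≤ x₂)
    (P : Set (ℝ × ℝ))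
    (hP : P = convexHull ℝ ({latticeCast (0, 0), latticeCast (0, -2),
      latticeCast (x₁, -1), latticeCast (x₂, -1)} : Set (ℝ × ℝ))) :
    ∀ r : ℤ × ℤ, latticeCast r ∈ P ↔
      (r = (0, 0) ∨ r = (0, -2) ∨ (r.2 = -1 ∧ x₁ ≤ r.1 ∧ r.1 ≤ x₂)) := by
  intro r
  subst hP
  set S : Set (ℝ × ℝ) := {latticeCast (0, 0), latticeCast (0, -2),
      latticeCast (x₁, -1), latticeCast (x₂, -1)} with hS
  constructor
  · intro hr
    -- the convex set of inequalities
    set C : Set (ℝ × ℝ) := {p : ℝ × ℝ |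
      p.1 + (x₂ : ℝ) * p.2 ≤ 0 ∧ 0 ≤ p.1 + (x₁ : ℝ) * p.2 ∧
      p.1 - (x₂ : ℝ) * p.2 ≤ 2 * x₂ ∧ 2 * (x₁ : ℝ) ≤ p.1 - (x₁ : ℝ) * p.2 ∧
      (-2 : ℝ) ≤ p.2 ∧ p.2 ≤ 0} with hC
    have hconv : Convex ℝ C := by
      intro p hp q hq a b ha hb hab
      simp only [hC, Set.mem_setOf_eq, Prod.fst_add, Prod.snd_add, Prod.smul_fst,
        Prod.smul_snd, smul_eq_mul] at hp hq ⊢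
      obtain ⟨p1, p2, p3, p4, p5, p6⟩ := hp
      obtain ⟨q1, q2, q3, q4, q5, q6⟩ := hq
      have he2 : a * (2 * (x₂ : ℝ)) + b * (2 * (x₂ : ℝ)) = 2 * x₂ := by
        rw [← add_mul, hab, one_mul]
      have he1 : a * (2 * (x₁ : ℝ)) + b * (2 * (x₁ : ℝ)) = 2 * x₁ := by
        rw [← add_mul, hab, one_mul]
      refine ⟨?_, ?_, ?_, ?_, ?_, ?_⟩
      · linarith [mul_le_mul_of_nonneg_left p1 ha, mul_le_mul_of_nonneg_left q1 hb]
      · linarith [mul_le_mul_of_nonneg_left p2 ha, mul_le_mul_of_nonneg_left q2 hb]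
      · linarith [mul_le_mul_of_nonneg_left p3 ha, mul_le_mul_of_nonneg_left q3 hb, he2]
      · linarith [mul_le_mul_of_nonneg_left p4 ha, mul_le_mul_of_nonneg_left q4 hb, he1]
      · linarith [mul_le_mul_of_nonneg_left p5 ha, mul_le_mul_of_nonneg_left q5 hb]
      · linarith [mul_le_mul_of_nonneg_left p6 ha, mul_le_mul_of_nonneg_left q6 hb]
    have hsub : S ⊆ C := by
      intro p hp
      have hx1 : (x₁ : ℝ) ≤ 0 := by exact_mod_cast h₁
      have hx2 : (0 : ℝ) ≤ (x₂ : ℝ) := by exact_mod_cast h₂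
      simp only [hS, Set.mem_insert_iff, Set.mem_singleton_iff, latticeCast] at hp
      rcases hp with h | h | h | h <;> subst h <;>
        simp only [hC, Set.mem_setOf_eq] <;> push_cast <;>
        refine ⟨by nlinarith, by nlinarith, by nlinarith, by nlinarith, by nlinarith,
          by nlinarith⟩
    have hmem : latticeCast r ∈ C := convexHull_min hsub hconv hr
    simp only [hC, Set.mem_setOf_eq, latticeCast] at hmem
    obtain ⟨e1, e2, e3, e4, e5, e6⟩ := hmem
    have E1 : r.1 + x₂ * r.2 ≤ 0 := by exact_mod_cast e1
    have E2 : 0 ≤ r.1 + x₁ * r.2 := by exact_mod_cast e2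
    have E3 : r.1 - x₂ * r.2 ≤ 2 * x₂ := by exact_mod_cast e3
    have E4 : 2 * x₁ ≤ r.1 - x₁ * r.2 := by exact_mod_cast e4
    have E5 : (-2 : ℤ) ≤ r.2 := by exact_mod_cast e5
    have E6 : r.2 ≤ 0 := by exact_mod_cast e6
    have hcases : r.2 = 0 ∨ r.2 = -1 ∨ r.2 = -2 := by omega
    rcases hcases with h | h | h
    · left
      rw [h] at E1 E2
      have : r.1 = 0 := by nlinarith
      exact Prod.ext this h
    · right; right
      rw [h] at E1 E2
      exact ⟨h, by nlinarith, by nlinarith⟩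
    · right; left
      rw [h] at E3 E4
      have : r.1 = 0 := by nlinarith
      exact Prod.ext this h
  · intro hr
    rcases hr with h | h | ⟨hy, hl, hr'⟩
    · subst h; exact subset_convexHull ℝ S (by simp [hS])
    · subst h; exact subset_convexHull ℝ S (by simp [hS])
    · have hseg : segment ℝ (latticeCast (x₁, -1)) (latticeCast (x₂, -1)) ⊆
          convexHull ℝ S := by
        apply segment_subset_convexHull <;> simp [hS]
      apply hseg
      rcases eq_or_lt_of_le (hl.trans hr') with heq | hlt
      · have hx : r.1 = x₁ := le_antisymm (by omega) hl
        have : latticeCast r = latticeCast (x₁, -1) := by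
          simp [latticeCast, hx, hy]
        rw [this]; exact left_mem_segment ℝ _ _
      · have hd : (0 : ℝ) < (x₂ : ℝ) - x₁ := by
          have : x₁ < x₂ := hlt
          push_cast
          linarith [show (x₁ : ℝ) < x₂ from by exact_mod_cast this]
        refine ⟨((x₂ : ℝ) - r.1) / ((x₂ : ℝ) - x₁), ((r.1 : ℝ) - x₁) / ((x₂ : ℝ) - x₁),
          ?_, ?_, ?_, ?_⟩
        · apply div_nonneg _ hd.le
          have : (r.1 : ℝ) ≤ x₂ := by exact_mod_cast hr'
          linarith
        · apply div_nonneg _ hd.le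
          have : (x₁ : ℝ) ≤ r.1 := by exact_mod_cast hl
          linarith
        · field_simp
          ring
        · simp only [latticeCast, Prod.smul_mk, smul_eq_mul, Prod.mk_add_mk, Prod.mk.injEq]
          have hy' : ((r.2 : ℤ) : ℝ) = -1 := by rw [hy]; push_cast; ring
          rw [hy']
          constructor
          · field_simp
            ring
          · field_simp <;> ring
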